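/- For every integer n ≥ 1, the independence domination number of the meta-chain hexagonal cactus M_n equals ⌈3n/2⌉. -/

import Mathlib

/-- `S` is an independent dominating set of `G`: pairwise non-adjacent, and every
vertex outside `S` has a neighbour in `S`. -/
def IsIndepDomSet {V : Type*} (G : SimpleGraph V) (S : Finset V) : Prop :=
  (∀ v ∈ S, ∀ w ∈ S, ¬ G.Adj v w) ∧ ∀ v, v ∉ S → ∃ w ∈ S, G.Adj v w

/-- The meta-chain hexagonal cactus `M n`: `Sum.inl i` is the cut vertex `x i`
(`0 ≤ i ≤ n`) and `Sum.inr (k, t)` for `t = 0, 1, 2, 3` is `a (k+1)`, `b (k+1)`,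
`c (k+1)`, `d (k+1)` respectively (`0 ≤ k ≤ n-1`); the `i`-th hexagon
(`1 ≤ i ≤ n`) is the six-cycle `x (i-1) – a i – x i – b i – c i – d i – x (i-1)`. -/
def metaHex (n : ℕ) : SimpleGraph (Fin (n + 1) ⊕ Fin n × Fin 4) :=
  SimpleGraph.fromRel fun p q =>
    match p, q with
    | Sum.inl i, Sum.inr (k, t) =>
        ((i : ℕ) = (k : ℕ) ∧ (t = 0 ∨ t = 3)) ∨
          ((i : ℕ) = (k : ℕ) + 1 ∧ (t = 0 ∨ t = 1))
    | Sum.inr (k, t), Sum.inr (k', t') =>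
        k = k' ∧ ((t = 1 ∧ t' = 2) ∨ (t = 2 ∧ t' = 3))
    | _, _ => False

/-- The number of independent dominating sets of the meta-chain hexagonal cactus `M n`. -/
noncomputable def numIDSMetaHex (n : ℕ) : ℕ :=
  Nat.card {S : Finset (Fin (n + 1) ⊕ Fin n × Fin 4) // IsIndepDomSet (metaHex n) S}

/-- The independence domination number of a graph: the minimum cardinality of an
independent dominating set. -/
noncomputable def indepDomNum {V : Type*} (G : SimpleGraph V) : ℕ :=
  sInf {k | ∃ S : Finset V, IsIndepDomSet G S ∧ S.card = k}

open Finset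
lemma card_odd_range (m : ℕ) : ((range m).filter (fun k => Odd k)).card = m / 2 := by
  induction m with
  | zero => simp
  | succ m ih =>
    rw [range_add_one, filter_insert]
    by_cases h : Odd m
    · rw [if_pos h, card_insert_of_notMem (by simp), ih]
      have := Nat.odd_iff.mp h; omega
    · rw [if_neg h, ih]
      have := Nat.even_iff.mp (Nat.not_odd_iff_even.mp h); omega

lemma card_even_range (m : ℕ) : ((range m).filter (fun k => Even k)).card = (m + 1) / 2 := by
  induction m with
  | zero => simp
  | succ m ih =>
    rw [range_add_one, filter_insert]
    by_cases h : Even m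
    · rw [if_pos h, card_insert_of_notMem (by simp), ih]
      have := Nat.even_iff.mp h; omega
    · rw [if_neg h, ih]
      have := Nat.odd_iff.mp (Nat.not_even_iff_odd.mp h); omega

lemma cover_lemma : ∀ (n : ℕ) (f g : ℕ → Prop) [DecidablePred f] [DecidablePred g],
    (∀ k < n, g k ∨ f k ∨ f (k + 1)) →
    (n + 1) / 2 ≤ ((range (n + 1)).filter f).card + ((range n).filter g).card := by
  intro n
  induction n using Nat.strong_induction_on with
  | _ n ih =>
    intro f g _ _ h
    match n with
    | 0 => simp
    | 1 =>
      show 1 ≤ ((range 2).filter f).card + ((range 1).filter g).card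
      rcases h 0 (by norm_num) with h0 | h0 | h0
      · have hm : 0 ∈ (range 1).filter g := by simp [h0]
        have := Finset.card_pos.mpr ⟨0, hm⟩; omega
      · have hm : 0 ∈ (range 2).filter f := by simp [h0]
        have := Finset.card_pos.mpr ⟨0, hm⟩; omega
      · have hm : 1 ∈ (range 2).filter f := by simp [h0]
        have := Finset.card_pos.mpr ⟨1, hm⟩; omega
    | (m + 2) =>
      show (m + 3) / 2 ≤ ((range (m + 3)).filter f).card + ((range (m + 2)).filter g).card
      have IH := ih m (by omega) f g (fun k hk => h k (by omega))
      have hf : ((range (m + 1)).filter f).card ≤ ((range (m + 3)).filter f).card :=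
        card_le_card (filter_subset_filter _ (range_subset_range.mpr (by omega)))
      have hg : ((range m).filter g).card ≤ ((range (m + 2)).filter g).card :=
        card_le_card (filter_subset_filter _ (range_subset_range.mpr (by omega)))
      have key : ∀ (s : Finset ℕ) (a : ℕ) (t : Finset ℕ), a ∉ s → insert a s ⊆ t →
          s.card + 1 ≤ t.card := by
        intro s a t ha hsub
        have := card_le_card hsub
        rwa [card_insert_of_notMem ha] at this
      rcases h (m + 1) (by omega) with hh | hh | hh
      · have hc := key ((range m).filter g) (m + 1) ((range (m + 2)).filter g)
          (by simp) (by intro x hx; simp at hx ⊢; rcases hx with rfl | hx; exact ⟨by omega, hh⟩; exact ⟨by omega, hx.2⟩)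
        omega
      · have hc := key ((range (m + 1)).filter f) (m + 1) ((range (m + 3)).filter f)
          (by simp) (by intro x hx; simp at hx ⊢; rcases hx with rfl | hx; exact ⟨by omega, hh⟩; exact ⟨by omega, hx.2⟩)
        omega
      · have hc := key ((range (m + 1)).filter f) (m + 2) ((range (m + 3)).filter f)
          (by simp) (by intro x hx; simp at hx ⊢; rcases hx with rfl | hx; exact ⟨by omega, hh⟩; exact ⟨by omega, hx.2⟩)
        omega

-- neighbors of a_{k+1} = inr (k,0)
lemma adj_a {n : ℕ} {k : Fin n} {w} (h : (metaHex n).Adj (Sum.inr (k, 0)) w) :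
    ∃ j : Fin (n + 1), w = Sum.inl j ∧ ((j : ℕ) = k ∨ (j : ℕ) = (k : ℕ) + 1) := by
  rcases w with j | ⟨k', t'⟩
  · refine ⟨j, rfl, ?_⟩
    simp only [metaHex, SimpleGraph.fromRel_adj] at h
    rcases h with ⟨-, h | h⟩
    · exact absurd h (by simp)
    · rcases h with (⟨h1, -⟩ | ⟨h1, -⟩) <;> [left; right] <;> exact h1
  · exfalso
    simp only [metaHex, SimpleGraph.fromRel_adj] at h
    rcases h with ⟨-, h | h⟩ <;> simp at h

-- neighbors of c_{k+1} = inr (k,2)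
lemma adj_c {n : ℕ} {k : Fin n} {w} (h : (metaHex n).Adj (Sum.inr (k, 2)) w) :
    w = Sum.inr (k, 1) ∨ w = Sum.inr (k, 3) := by
  rcases w with j | ⟨k', t'⟩
  · exfalso
    simp only [metaHex, SimpleGraph.fromRel_adj] at h
    rcases h with ⟨-, h | h⟩ <;> simp at h
  · simp only [metaHex, SimpleGraph.fromRel_adj] at h
    rcases h with ⟨-, ⟨rfl, h | h⟩ | ⟨rfl, h | h⟩⟩
    · exact absurd h.1 (by decide)
    · right; rw [h.2]
    · left; rw [h.1]
    · exact absurd h.2 (by decide)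

def FT (n : ℕ) (t : Fin 4) (p : ℕ → Prop) [DecidablePred p] : Finset (Fin n × Fin 4) :=
  (((Finset.range n).filter p).attachFin
    (fun m hm => Finset.mem_range.mp (Finset.mem_filter.mp hm).1)).map
    ⟨fun k => (k, t), fun a b h => by simpa [Prod.ext_iff] using h⟩

lemma mem_FT {n : ℕ} {t : Fin 4} {p : ℕ → Prop} [DecidablePred p] {v : Fin n × Fin 4} :
    v ∈ FT n t p ↔ v.2 = t ∧ p v.1 := by
  rcases v with ⟨k, s⟩
  simp only [FT, Finset.mem_map, Finset.mem_attachFin, Finset.mem_filter, Finset.mem_range,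
    Function.Embedding.coeFn_mk, Prod.ext_iff]
  constructor
  · rintro ⟨a, ⟨-, hp⟩, rfl, rfl⟩; exact ⟨rfl, hp⟩
  · rintro ⟨rfl, hp⟩; exact ⟨k, ⟨k.isLt, hp⟩, rfl, rfl⟩

lemma card_FT {n : ℕ} {t : Fin 4} {p : ℕ → Prop} [DecidablePred p] :
    (FT n t p).card = ((range n).filter p).card := by
  simp [FT, Finset.card_attachFin]

def UB (n : ℕ) : Finset (Fin (n + 1) ⊕ Fin n × Fin 4) :=
  ((((Finset.range (n + 1)).filter (fun i => Odd i ∧ i ≠ n)).attachFin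
      (fun m hm => Finset.mem_range.mp (Finset.mem_filter.mp hm).1)).disjSum
    (FT n 0 (fun k => k + 1 = n ∧ Odd n) ∪ FT n 1 (fun k => Odd k) ∪
      FT n 2 (fun k => k + 1 = n ∧ Odd n) ∪ FT n 3 (fun k => Even k ∧ k + 1 ≠ n)))

lemma mem_UB_inl {n : ℕ} {i : Fin (n + 1)} :
    Sum.inl i ∈ UB n ↔ Odd (i : ℕ) ∧ (i : ℕ) ≠ n := by
  simp [UB, Finset.inl_mem_disjSum, Finset.mem_attachFin]
  exact fun _ _ => Nat.lt_succ_iff.mp i.isLt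

lemma mem_UB_inr {n : ℕ} {k : Fin n} {t : Fin 4} :
    Sum.inr (k, t) ∈ UB n ↔
      (t = 0 ∧ (k : ℕ) + 1 = n ∧ Odd n) ∨ (t = 1 ∧ Odd (k : ℕ)) ∨
      (t = 2 ∧ (k : ℕ) + 1 = n ∧ Odd n) ∨ (t = 3 ∧ Even (k : ℕ) ∧ (k : ℕ) + 1 ≠ n) := by
  simp only [UB, Finset.inr_mem_disjSum, Finset.mem_union, mem_FT]
  tauto

lemma card_UB {n : ℕ} (hn : 1 ≤ n) : (UB n).card = (3 * n + 1) / 2 := by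
  have hd : ∀ (t t' : Fin 4) (p q : ℕ → Prop) [DecidablePred p] [DecidablePred q], t ≠ t' →
      Disjoint (FT n t p) (FT n t' q) := by
    intro t t' p q _ _ hne
    rw [Finset.disjoint_left]
    intro v hv hv'
    rw [mem_FT] at hv hv'
    exact hne (hv.1 ▸ hv'.1)
  rw [UB, Finset.card_disjSum, Finset.card_attachFin]
  rw [Finset.card_union_of_disjoint (by
        refine Finset.disjoint_union_left.mpr ⟨Finset.disjoint_union_left.mpr ⟨?_, ?_⟩, ?_⟩ <;>
          exact hd _ _ _ _ (by decide)),
      Finset.card_union_of_disjoint (by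
        refine Finset.disjoint_union_left.mpr ⟨?_, ?_⟩ <;> exact hd _ _ _ _ (by decide)),
      Finset.card_union_of_disjoint (hd _ _ _ _ (by decide))]
  simp only [card_FT]
  -- now pure nat counting
  have h1 : ((range (n + 1)).filter (fun i => Odd i ∧ i ≠ n)).card = n / 2 := by
    rcases Nat.even_or_odd n with he | ho
    · have : ((range (n + 1)).filter (fun i => Odd i ∧ i ≠ n)) =
          ((range (n + 1)).filter (fun i => Odd i)) := by
        apply Finset.filter_congr
        intro x hx
        simp only [and_iff_left_iff_imp]
        intro hox heq
        rw [heq] at hox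
        have := Nat.odd_iff.mp hox; have := Nat.even_iff.mp he; omega
      rw [this, card_odd_range]
      have := Nat.even_iff.mp he; omega
    · have : ((range (n + 1)).filter (fun i => Odd i ∧ i ≠ n)) =
          ((range n).filter (fun i => Odd i)) := by
        ext x
        simp only [Finset.mem_filter, Finset.mem_range]
        constructor
        · rintro ⟨hx, ho2, hne⟩; exact ⟨by omega, ho2⟩
        · rintro ⟨hx, ho2⟩; exact ⟨by omega, ho2, by omega⟩
      rw [this, card_odd_range]
  have h0 : ((range n).filter (fun k => k + 1 = n ∧ Odd n)).card = if Odd n then 1 else 0 := by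
    split_ifs with ho
    · have : ((range n).filter (fun k => k + 1 = n ∧ Odd n)) = {n - 1} := by
        ext x
        simp only [Finset.mem_filter, Finset.mem_range, Finset.mem_singleton]
        constructor
        · rintro ⟨-, h, -⟩; omega
        · rintro rfl; exact ⟨by omega, by omega, ho⟩
      rw [this]; rfl
    · have : ((range n).filter (fun k => k + 1 = n ∧ Odd n)) = ∅ := by
        ext x; simp only [Finset.mem_filter, Finset.mem_range, Finset.notMem_empty, iff_false]
        rintro ⟨-, -, h⟩; exact ho h
      rw [this]; rfl
  have h3 : ((range n).filter (fun k => Even k ∧ k + 1 ≠ n)).card = n / 2 := by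
    rcases Nat.even_or_odd n with he | ho
    · have : ((range n).filter (fun k => Even k ∧ k + 1 ≠ n)) =
          ((range n).filter (fun k => Even k)) := by
        apply Finset.filter_congr
        intro x hx
        simp only [and_iff_left_iff_imp]
        intro hex h
        have := Nat.even_iff.mp he; have := Nat.even_iff.mp hex; omega
      rw [this, card_even_range]
      have := Nat.even_iff.mp he; omega
    · have : ((range n).filter (fun k => Even k ∧ k + 1 ≠ n)) =
          ((range (n - 1)).filter (fun k => Even k)) := by
        ext x
        simp only [Finset.mem_filter, Finset.mem_range]
        constructor
        · rintro ⟨hx, he2, hne⟩; exact ⟨by omega, he2⟩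
        · rintro ⟨hx, he2⟩; exact ⟨by omega, he2, by omega⟩
      rw [this, card_even_range]
      have := Nat.odd_iff.mp ho; omega
  rw [h1, h0, card_odd_range, h3]
  rcases Nat.even_or_odd n with he | ho
  · rw [if_neg (by simpa using he)]
    have := Nat.even_iff.mp he; omega
  · rw [if_pos ho]
    have := Nat.odd_iff.mp ho; omega

lemma UB_indep (n : ℕ) : ∀ v ∈ UB n, ∀ w ∈ UB n, ¬ (metaHex n).Adj v w := by
  rintro (i | ⟨k, t⟩) hv (j | ⟨k', t'⟩) hw hadj
  · rcases (SimpleGraph.fromRel_adj _ _ _).mp hadj with ⟨-, h | h⟩ <;> exact h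
  · -- inl i, inr (k', t')
    rw [mem_UB_inl] at hv
    rw [mem_UB_inr] at hw
    rcases (SimpleGraph.fromRel_adj _ _ _).mp hadj with ⟨-, h | h⟩
    swap
    · exact h
    rcases hw with ⟨rfl, hk, hon⟩ | ⟨rfl, hk⟩ | ⟨rfl, hk, hon⟩ | ⟨rfl, hk1, hk2⟩ <;>
      simp only [show ((0:Fin 4) = 0 ∨ (0:Fin 4) = 3) from Or.inl rfl,
        and_true] at h <;>
    · rcases h with ⟨h1, h2⟩ | ⟨h1, h2⟩ <;>
      first
        | (revert h2; decide)
        | (simp only [Nat.odd_iff, Nat.even_iff] at *; omega)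
  · -- inr, inl
    rw [mem_UB_inl] at hw
    rw [mem_UB_inr] at hv
    rcases (SimpleGraph.fromRel_adj _ _ _).mp hadj with ⟨-, h | h⟩
    · exact h
    rcases hv with ⟨rfl, hk, hon⟩ | ⟨rfl, hk⟩ | ⟨rfl, hk, hon⟩ | ⟨rfl, hk1, hk2⟩ <;>
    · rcases h with ⟨h1, h2⟩ | ⟨h1, h2⟩ <;>
      first
        | (revert h2; decide)
        | (simp only [Nat.odd_iff, Nat.even_iff] at *; omega)
  · -- inr, inr
    rw [mem_UB_inr] at hv hw
    rcases (SimpleGraph.fromRel_adj _ _ _).mp hadj with ⟨-, h | h⟩ <;>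
    · obtain ⟨rfl, h2⟩ := h
      rcases hv with ⟨rfl, hv2⟩ | ⟨rfl, hv2⟩ | ⟨rfl, hv2⟩ | ⟨rfl, hv2⟩ <;>
        rcases hw with ⟨ht', hw2⟩ | ⟨ht', hw2⟩ | ⟨ht', hw2⟩ | ⟨ht', hw2⟩ <;>
        subst ht' <;>
        first
          | (rcases h2 with ⟨e1, e2⟩ | ⟨e1, e2⟩ <;> (first | exact absurd e1 (by decide) | exact absurd e2 (by decide)))
          | (simp only [Nat.odd_iff, Nat.even_iff] at *; omega)

lemma UB_dom (n : ℕ) (hn : 1 ≤ n) : ∀ v, v ∉ UB n → ∃ w ∈ UB n, (metaHex n).Adj v w := by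
  rintro (i | ⟨k, t⟩) hv
  · rw [mem_UB_inl, not_and_or] at hv
    by_cases hin : (i : ℕ) = n
    · rcases Nat.even_or_odd n with he | ho
      · refine ⟨Sum.inr (⟨n - 1, by omega⟩, 1), ?_, ?_⟩
        · rw [mem_UB_inr]
          refine Or.inr (Or.inl ⟨rfl, ?_⟩)
          simp only [Nat.odd_iff, Nat.even_iff] at *; omega
        · refine (SimpleGraph.fromRel_adj _ _ _).mpr ⟨by simp, Or.inl (Or.inr ⟨by simp; omega, Or.inr rfl⟩)⟩
      · refine ⟨Sum.inr (⟨n - 1, by omega⟩, 0), ?_, ?_⟩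
        · rw [mem_UB_inr]
          exact Or.inl ⟨rfl, by simp; omega, ho⟩
        · refine (SimpleGraph.fromRel_adj _ _ _).mpr ⟨by simp, Or.inl (Or.inr ⟨by simp; omega, Or.inl rfl⟩)⟩
    · have hlt : (i : ℕ) < n := by have := i.isLt; omega
      have hev : Even (i : ℕ) := by
        rcases hv with h | h
        · exact Nat.not_odd_iff_even.mp h
        · exact absurd hin (by simpa using h)
      by_cases hio : (i : ℕ) + 1 = n ∧ Odd n
      · refine ⟨Sum.inr (⟨i, hlt⟩, 0), ?_, ?_⟩
        · rw [mem_UB_inr]; exact Or.inl ⟨rfl, hio⟩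
        · exact (SimpleGraph.fromRel_adj _ _ _).mpr ⟨by simp, Or.inl (Or.inl ⟨rfl, Or.inl rfl⟩)⟩
      · refine ⟨Sum.inr (⟨i, hlt⟩, 3), ?_, ?_⟩
        · rw [mem_UB_inr]
          refine Or.inr (Or.inr (Or.inr ⟨rfl, hev, ?_⟩))
          intro heq
          exact hio ⟨heq, by rw [← heq]; exact Even.add_one hev⟩
        · exact (SimpleGraph.fromRel_adj _ _ _).mpr ⟨by simp, Or.inl (Or.inl ⟨rfl, Or.inr rfl⟩)⟩
  · obtain rfl | rfl | rfl | rfl : t = 0 ∨ t = 1 ∨ t = 2 ∨ t = 3 := by fin_cases t <;> simp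
    · -- a
      rw [mem_UB_inr] at hv
      simp only [show ¬((0:Fin 4) = 1) from by decide, show ¬((0:Fin 4) = 2) from by decide,
        show ¬((0:Fin 4) = 3) from by decide, false_and, or_false, false_or, true_and,
        show ((0:Fin 4) = 0) from rfl] at hv
      by_cases hk : Odd (k : ℕ)
      · refine ⟨Sum.inl ⟨k, by omega⟩, ?_, ?_⟩
        · rw [mem_UB_inl]; exact ⟨hk, by have := k.isLt; simp only [Fin.val_mk]; omega⟩
        · exact (SimpleGraph.fromRel_adj _ _ _).mpr ⟨by simp, Or.inr (Or.inl ⟨rfl, Or.inl rfl⟩)⟩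
      · refine ⟨Sum.inl ⟨(k : ℕ) + 1, by have := k.isLt; omega⟩, ?_, ?_⟩
        · rw [mem_UB_inl]
          have hev := Nat.not_odd_iff_even.mp hk
          refine ⟨by simpa using Even.add_one hev, fun heq => hv ⟨by simpa using heq, ?_⟩⟩
          have : (k : ℕ) + 1 = n := by simpa using heq
          rw [← this]; exact Even.add_one hev
        · exact (SimpleGraph.fromRel_adj _ _ _).mpr ⟨by simp, Or.inr (Or.inr ⟨rfl, Or.inl rfl⟩)⟩
    · -- b
      rw [mem_UB_inr] at hv
      simp only [show ¬((1:Fin 4) = 0) from by decide, show ¬((1:Fin 4) = 2) from by decide,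
        show ¬((1:Fin 4) = 3) from by decide, false_and, or_false, false_or, true_and,
        show ((1:Fin 4) = 1) from rfl] at hv
      have hev := Nat.not_odd_iff_even.mp hv
      by_cases hk1 : (k : ℕ) + 1 = n
      · refine ⟨Sum.inr (k, 2), ?_, ?_⟩
        · rw [mem_UB_inr]
          exact Or.inr (Or.inr (Or.inl ⟨rfl, hk1, by rw [← hk1]; exact Even.add_one hev⟩))
        · exact (SimpleGraph.fromRel_adj _ _ _).mpr
            ⟨by simp, Or.inl ⟨rfl, Or.inl ⟨rfl, rfl⟩⟩⟩
      · refine ⟨Sum.inl ⟨(k : ℕ) + 1, by have := k.isLt; omega⟩, ?_, ?_⟩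
        · rw [mem_UB_inl]
          exact ⟨by simpa using Even.add_one hev, by simpa using hk1⟩
        · exact (SimpleGraph.fromRel_adj _ _ _).mpr ⟨by simp, Or.inr (Or.inr ⟨rfl, Or.inr rfl⟩)⟩
    · -- c
      rw [mem_UB_inr] at hv
      simp only [show ¬((2:Fin 4) = 0) from by decide, show ¬((2:Fin 4) = 1) from by decide,
        show ¬((2:Fin 4) = 3) from by decide, false_and, or_false, false_or, true_and,
        show ((2:Fin 4) = 2) from rfl] at hv
      by_cases hk : Odd (k : ℕ)
      · refine ⟨Sum.inr (k, 1), ?_, ?_⟩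
        · rw [mem_UB_inr]; exact Or.inr (Or.inl ⟨rfl, hk⟩)
        · exact (SimpleGraph.fromRel_adj _ _ _).mpr
            ⟨by simp, Or.inr ⟨rfl, Or.inl ⟨rfl, rfl⟩⟩⟩
      · have hev := Nat.not_odd_iff_even.mp hk
        refine ⟨Sum.inr (k, 3), ?_, ?_⟩
        · rw [mem_UB_inr]
          refine Or.inr (Or.inr (Or.inr ⟨rfl, hev, fun heq => hv ⟨heq, ?_⟩⟩))
          rw [← heq]; exact Even.add_one hev
        · exact (SimpleGraph.fromRel_adj _ _ _).mpr
            ⟨by simp, Or.inl ⟨rfl, Or.inr ⟨rfl, rfl⟩⟩⟩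
    · -- d
      rw [mem_UB_inr] at hv
      simp only [show ¬((3:Fin 4) = 0) from by decide, show ¬((3:Fin 4) = 1) from by decide,
        show ¬((3:Fin 4) = 2) from by decide, false_and, or_false, false_or, true_and,
        show ((3:Fin 4) = 3) from rfl, not_and_or] at hv
      by_cases hk : Odd (k : ℕ)
      · refine ⟨Sum.inl ⟨k, by omega⟩, ?_, ?_⟩
        · rw [mem_UB_inl]; exact ⟨hk, by have := k.isLt; simp only [Fin.val_mk]; omega⟩
        · exact (SimpleGraph.fromRel_adj _ _ _).mpr ⟨by simp, Or.inr (Or.inl ⟨rfl, Or.inr rfl⟩)⟩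
      · have hev := Nat.not_odd_iff_even.mp hk
        have hk1 : (k : ℕ) + 1 = n := by
          rcases hv with h | h
          · exact absurd hev h
          · simpa using h
        refine ⟨Sum.inr (k, 2), ?_, ?_⟩
        · rw [mem_UB_inr]
          exact Or.inr (Or.inr (Or.inl ⟨rfl, hk1, by rw [← hk1]; exact Even.add_one hev⟩))
        · exact (SimpleGraph.fromRel_adj _ _ _).mpr
            ⟨by simp, Or.inr ⟨rfl, Or.inr ⟨rfl, rfl⟩⟩⟩

lemma metaHex_LB (n : ℕ) (S : Finset (Fin (n + 1) ⊕ Fin n × Fin 4))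
    (hS : IsIndepDomSet (metaHex n) S) : (3 * n + 1) / 2 ≤ S.card := by
  classical
  have hbcd : ∀ k : Fin n, Sum.inr (k, 1) ∈ S ∨ Sum.inr (k, 2) ∈ S ∨ Sum.inr (k, 3) ∈ S := by
    intro k
    by_cases h2 : Sum.inr (k, (2 : Fin 4)) ∈ S
    · exact Or.inr (Or.inl h2)
    · obtain ⟨w, hw, hadj⟩ := hS.2 _ h2
      rcases adj_c hadj with rfl | rfl
      · exact Or.inl hw
      · exact Or.inr (Or.inr hw)
  have ha : ∀ k : Fin n, Sum.inr (k, 0) ∈ S ∨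
      ∃ j : Fin (n + 1), Sum.inl j ∈ S ∧ ((j : ℕ) = k ∨ (j : ℕ) = (k : ℕ) + 1) := by
    intro k
    by_cases h0 : Sum.inr (k, (0 : Fin 4)) ∈ S
    · exact Or.inl h0
    · obtain ⟨w, hw, hadj⟩ := hS.2 _ h0
      obtain ⟨j, rfl, hj⟩ := adj_a hadj
      exact Or.inr ⟨j, hw, hj⟩
  set f : ℕ → Prop := fun j => ∃ h : j < n + 1, Sum.inl (⟨j, h⟩ : Fin (n + 1)) ∈ S with hf
  set g : ℕ → Prop := fun k => ∃ h : k < n, Sum.inr ((⟨k, h⟩ : Fin n), (0 : Fin 4)) ∈ S with hg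
  have hcov : ∀ k < n, g k ∨ f k ∨ f (k + 1) := by
    intro k hk
    rcases ha ⟨k, hk⟩ with h | ⟨j, hj, hjk | hjk⟩
    · exact Or.inl ⟨hk, h⟩
    · refine Or.inr (Or.inl ⟨by omega, ?_⟩)
      have he : (⟨k, by omega⟩ : Fin (n + 1)) = j := Fin.ext (by simpa using hjk.symm)
      rw [he]; exact hj
    · refine Or.inr (Or.inr ⟨by omega, ?_⟩)
      have he : (⟨k + 1, by omega⟩ : Fin (n + 1)) = j := Fin.ext (by simpa using hjk.symm)
      rw [he]; exact hj
  have key2 := cover_lemma n f g hcov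
  set SX := S.filter (fun v => ∃ j : Fin (n + 1), v = Sum.inl j) with hSX
  set SA := S.filter (fun v => ∃ k : Fin n, v = Sum.inr (k, (0 : Fin 4))) with hSA
  set S1 := S.filter (fun v => ∃ (k : Fin n) (t : Fin 4), v = Sum.inr (k, t) ∧ t ≠ 0) with hS1
  have e1 : ((range (n + 1)).filter f).card = SX.card := by
    apply Finset.card_bij (fun a ha => Sum.inl (⟨a, mem_range.mp (mem_filter.mp ha).1⟩ : Fin (n + 1)))
    · intro a ha
      obtain ⟨hr, hfa⟩ := mem_filter.mp ha
      obtain ⟨h, hmem⟩ := hfa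
      exact mem_filter.mpr ⟨hmem, _, rfl⟩
    · intro a ha b hb h
      simpa using h
    · intro v hv
      obtain ⟨hvS, j, rfl⟩ := mem_filter.mp hv
      exact ⟨(j : ℕ), mem_filter.mpr ⟨mem_range.mpr j.isLt, j.isLt, by simpa using hvS⟩, by simp⟩
  have e2 : ((range n).filter g).card = SA.card := by
    apply Finset.card_bij (fun a ha => Sum.inr ((⟨a, mem_range.mp (mem_filter.mp ha).1⟩ : Fin n), (0 : Fin 4)))
    · intro a ha
      obtain ⟨hr, hga⟩ := mem_filter.mp ha
      obtain ⟨h, hmem⟩ := hga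
      exact mem_filter.mpr ⟨hmem, _, rfl⟩
    · intro a ha b hb h
      simpa using h
    · intro v hv
      obtain ⟨hvS, k, rfl⟩ := mem_filter.mp hv
      exact ⟨(k : ℕ), mem_filter.mpr ⟨mem_range.mpr k.isLt, k.isLt, by simpa using hvS⟩, by simp⟩
  have hn1 : n ≤ S1.card := by
    set φ : Fin n → Fin (n + 1) ⊕ Fin n × Fin 4 := fun k =>
      if Sum.inr (k, (1 : Fin 4)) ∈ S then Sum.inr (k, 1)
      else if Sum.inr (k, (2 : Fin 4)) ∈ S then Sum.inr (k, 2) else Sum.inr (k, 3) with hφ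
    have hform : ∀ k, ∃ t : Fin 4, φ k = Sum.inr (k, t) ∧ t ≠ 0 := by
      intro k
      rw [hφ]
      dsimp only
      split_ifs <;> exact ⟨_, rfl, by decide⟩
    have hmem : ∀ k : Fin n, φ k ∈ S1 := by
      intro k
      have hin : φ k ∈ S := by
        rw [hφ]; dsimp only
        split_ifs with h1 h2
        · exact h1
        · exact h2
        · rcases hbcd k with h | h | h
          · exact absurd h h1
          · exact absurd h h2
          · exact h
      obtain ⟨t, ht, ht0⟩ := hform k
      exact mem_filter.mpr ⟨hin, k, t, ht, ht0⟩
    calc n = (univ : Finset (Fin n)).card := by simp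
    _ ≤ S1.card := Finset.card_le_card_of_injOn φ (fun k _ => hmem k) (by
        intro a _ b _ h
        obtain ⟨ta, hta, -⟩ := hform a
        obtain ⟨tb, htb, -⟩ := hform b
        rw [hta, htb] at h
        exact congrArg Prod.fst (Sum.inr_injective h))
  have d1 : Disjoint S1 SX := by
    rw [Finset.disjoint_left]
    rintro v hv1 hv2
    obtain ⟨-, k, t, rfl, -⟩ := mem_filter.mp hv1
    obtain ⟨-, j, hj⟩ := mem_filter.mp hv2
    exact absurd hj (by simp)
  have d2 : Disjoint S1 SA := by
    rw [Finset.disjoint_left]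
    rintro v hv1 hv2
    obtain ⟨-, k, t, rfl, ht⟩ := mem_filter.mp hv1
    obtain ⟨-, k', hk'⟩ := mem_filter.mp hv2
    rw [Sum.inr.injEq, Prod.ext_iff] at hk'
    exact ht hk'.2
  have d3 : Disjoint SX SA := by
    rw [Finset.disjoint_left]
    rintro v hv1 hv2
    obtain ⟨-, j, rfl⟩ := mem_filter.mp hv1
    obtain ⟨-, k', hk'⟩ := mem_filter.mp hv2
    exact absurd hk' (by simp)
  have hsub : S1 ∪ SX ∪ SA ⊆ S :=
    union_subset (union_subset (filter_subset _ _) (filter_subset _ _)) (filter_subset _ _)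
  have hcards : S1.card + SX.card + SA.card ≤ S.card := by
    have hc := card_le_card hsub
    rwa [card_union_of_disjoint (disjoint_union_left.mpr ⟨d2, d3⟩),
      card_union_of_disjoint d1] at hc
  omega

/-- For every `n ≥ 1`, the independence domination number of the meta-chain
hexagonal cactus `M n` equals `⌈3n/2⌉`. -/
theorem indepDomNum_metaHex (n : ℕ) (hn : 1 ≤ n) :
    indepDomNum (metaHex n) = (3 * n + 1) / 2 := by
  apply le_antisymm
  · exact Nat.sInf_le ⟨UB n, ⟨UB_indep n, UB_dom n hn⟩, card_UB hn⟩
  · refine le_csInf ⟨(3 * n + 1) / 2, UB n, ⟨UB_indep n, UB_dom n hn⟩, card_UB hn⟩ ?_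
    rintro m ⟨S, hS, rfl⟩
    exact metaHex_LB n S hS
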